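/- Let B be a quasi-greedy basis with quasi-greedy constant C_q over the complex field. If 0 < t ≤ 1 and A is a t-greedy set for x ∈ X, then ‖P_A(x)‖ ≤ (C_q + 4t⁻¹C_q²)‖x‖. (Reduction of the weak-greedy projection bound from the real to the complex case via sign-rotation of the basis.) -/

import Mathlib

open Finset


lemma abel_sum {X : Type*} [NormedAddCommGroup X] [NormedSpace ℂ X]
    (v : ℕ → X) (K : ℝ) (hK : 0 ≤ K) :
    ∀ (n : ℕ) (S : Finset ℕ), S.card ≤ n → ∀ (ν : ℕ → ℝ) (M : ℝ), 0 ≤ M →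
      (∀ i ∈ S, 0 ≤ ν i ∧ ν i ≤ M) →
      (∀ T ⊆ S, (∀ i ∈ T, ∀ j ∈ S, j ∉ T → ν j ≤ ν i) → ‖∑ i ∈ T, v i‖ ≤ K) →
      ‖∑ i ∈ S, (ν i : ℂ) • v i‖ ≤ M * K := by
  intro n
  induction n with
  | zero =>
    intro S hS ν M hM _ _
    have : S = ∅ := Finset.card_eq_zero.mp (Nat.le_zero.mp hS)
    subst this
    simpa using mul_nonneg hM hK
  | succ n ih =>
    intro S hS ν M hM hbd hT
    rcases S.eq_empty_or_nonempty with rfl | hne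
    · simpa using mul_nonneg hM hK
    · set m := S.inf' hne ν with hm
      obtain ⟨i₀, hi₀S, hi₀⟩ := S.exists_mem_eq_inf' hne ν
      have hmle : ∀ i ∈ S, m ≤ ν i := fun i hi => Finset.inf'_le ν hi
      have hm0 : 0 ≤ m := by rw [hm, hi₀]; exact (hbd i₀ hi₀S).1
      have hmM : m ≤ M := by rw [hm, hi₀]; exact (hbd i₀ hi₀S).2
      set S' := S.filter (fun i => m < ν i) with hS'
      have hS'sub : S' ⊆ S := Finset.filter_subset _ _
      have hi₀notin : i₀ ∉ S' := by
        simp [hS', hi₀S, ← hi₀]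
        exact ⟨i₀, hi₀S, by simp [hm, hi₀]⟩
      have hcard : S'.card ≤ n := by
        have : S'.card < S.card := Finset.card_lt_card (Finset.ssubset_iff_of_subset hS'sub |>.mpr ⟨i₀, hi₀S, hi₀notin⟩)
        omega
      -- decomposition
      have hdecomp : ∑ i ∈ S, (ν i : ℂ) • v i
          = (m : ℂ) • ∑ i ∈ S, v i + ∑ i ∈ S', ((ν i - m : ℝ) : ℂ) • v i := by
        rw [Finset.smul_sum]
        have : ∑ i ∈ S', ((ν i - m : ℝ) : ℂ) • v i
            = ∑ i ∈ S, ((ν i - m : ℝ) : ℂ) • v i := by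
          refine Finset.sum_subset hS'sub ?_
          intro i hiS hinot
          have : ν i = m := le_antisymm (not_lt.mp (by simpa [hS', hiS] using hinot)) (hmle i hiS)
          simp [this]
        rw [this, ← Finset.sum_add_distrib]
        refine Finset.sum_congr rfl fun i _ => ?_
        rw [← add_smul]
        norm_num
      have h1 : ‖(m : ℂ) • ∑ i ∈ S, v i‖ ≤ m * K := by
        rw [norm_smul, Complex.norm_real, Real.norm_eq_abs, abs_of_nonneg hm0]
        exact mul_le_mul_of_nonneg_left (hT S (subset_refl S) (fun i _ j _ hj => absurd ‹j ∈ S› hj)) hm0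
      have h2 : ‖∑ i ∈ S', ((ν i - m : ℝ) : ℂ) • v i‖ ≤ (M - m) * K := by
        refine ih S' hcard (fun i => ν i - m) (M - m) (by linarith) ?_ ?_
        · intro i hi
          have hiS := hS'sub hi
          have h2 := (hbd i hiS).2
          have hlt : m < ν i := (Finset.mem_filter.mp hi).2
          refine ⟨?_, ?_⟩ <;> · show _ ≤ _; linarith
        · intro T hTsub hTup
          refine hT T (hTsub.trans hS'sub) ?_
          intro i hiT j hjS hjT
          by_cases hjS' : j ∈ S'
          · have := hTup i hiT j hjS' hjT
            linarith
          · have : ν j = m := le_antisymm (not_lt.mp (by simpa [hS', hjS] using hjS')) (hmle j hjS)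
            rw [this]
            exact hmle i (hS'sub (hTsub hiT))
      calc ‖∑ i ∈ S, (ν i : ℂ) • v i‖ ≤ m * K + (M - m) * K := by
            rw [hdecomp]; exact (norm_add_le _ _).trans (add_le_add h1 h2)
        _ = M * K := by ring

/-- For a `Cq`-quasi-greedy basis of a complex Banach space, if `A` is a
`t`-greedy set for `x` (`0 < t ≤ 1`), then `‖P_A(x)‖ ≤ (Cq + 4t⁻¹Cq²)‖x‖`. -/
theorem stmt15
    {X : Type*} [NormedAddCommGroup X] [NormedSpace ℂ X]
    (e : ℕ → X) (f : ℕ → X →L[ℂ] ℂ)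
    (hbi : ∀ i j, f i (e j) = if i = j then (1 : ℂ) else 0)
    (α₁ α₂ : ℝ) (hα₁pos : 0 < α₁) (hα₂pos : 0 < α₂)
    (hα₁ : ∀ i, ‖e i‖ ≤ α₁) (hα₂ : ∀ i, ‖f i‖ ≤ α₂)
    (hdense : Dense (↑(Submodule.span ℂ (Set.range e)) : Set X))
    (Cq : ℝ) (hCq : 0 < Cq)
    (hqg : ∀ (x : X) (A : Finset ℕ),
      (∀ i ∈ A, ∀ j ∉ A, ‖f j x‖ ≤ ‖f i x‖) →
      ‖∑ i ∈ A, f i x • e i‖ ≤ Cq * ‖x‖)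
    (t : ℝ) (ht0 : 0 < t) (ht1 : t ≤ 1) :
    ∀ (x : X) (A : Finset ℕ),
      (∀ i ∈ A, ∀ j ∉ A, t * ‖f j x‖ ≤ ‖f i x‖) →
      ‖∑ i ∈ A, f i x • e i‖ ≤ (Cq + 4 * t⁻¹ * Cq ^ 2) * ‖x‖ := by
  intro x A hA
  have ht0' : 0 < t⁻¹ := inv_pos.mpr ht0
  have hxnn : 0 ≤ ‖x‖ := norm_nonneg x
  have hRHSge : Cq * ‖x‖ ≤ (Cq + 4 * t⁻¹ * Cq ^ 2) * ‖x‖ := by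
    have h : 0 ≤ 4 * t⁻¹ * Cq ^ 2 * ‖x‖ := by positivity
    nlinarith
  rcases A.eq_empty_or_nonempty with rfl | hAne
  · simp only [Finset.sum_empty, norm_zero]
    nlinarith
  set a := A.inf' hAne (fun i => ‖f i x‖) with ha
  obtain ⟨i₀, hi₀A, hi₀⟩ := A.exists_mem_eq_inf' hAne (fun i => ‖f i x‖)
  have hamin : ∀ i ∈ A, a ≤ ‖f i x‖ := fun i hi => Finset.inf'_le _ hi
  have hout : ∀ j ∉ A, t * ‖f j x‖ ≤ a := by
    intro j hj
    have := hA i₀ hi₀A j hj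
    rw [ha, hi₀]; exact this
  rcases eq_or_lt_of_le (by rw [ha, hi₀]; exact norm_nonneg _ : (0:ℝ) ≤ a) with haz | hapos
  · -- a = 0 : A is itself a greedy set
    have : ∀ i ∈ A, ∀ j ∉ A, ‖f j x‖ ≤ ‖f i x‖ := by
      intro i hi j hj
      have h1 := hout j hj
      have h2 := hamin i hi
      nlinarith [norm_nonneg (f j x)]
    exact (hqg x A this).trans hRHSge
  · -- a > 0 : main case
    -- coefficients are small outside a finite set
    have hx_cl : x ∈ closure (↑(Submodule.span ℂ (Set.range e)) : Set X) := hdense x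
    rw [Metric.mem_closure_iff] at hx_cl
    obtain ⟨y, hy_mem, hy_dist⟩ := hx_cl (a / α₂) (div_pos hapos hα₂pos)
    obtain ⟨c, hc⟩ := (Finsupp.mem_span_range_iff_exists_finsupp).mp hy_mem
    have hsmall : ∀ j ∉ c.support, ‖f j x‖ < a := by
      intro j hj
      have hfy : f j y = 0 := by
        rw [← hc]
        rw [map_finsuppSum, Finsupp.sum]
        refine Finset.sum_eq_zero ?_
        intro i hi
        rw [map_smul, hbi]
        rcases eq_or_ne j i with rfl | hne
        · exact absurd hi hj
        · simp [hne]
      have : ‖f j x‖ = ‖f j (x - y)‖ := by rw [map_sub, hfy, sub_zero]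
      rw [this]
      calc ‖f j (x - y)‖ ≤ ‖f j‖ * ‖x - y‖ := (f j).le_opNorm _
        _ ≤ α₂ * ‖x - y‖ := by
            exact mul_le_mul_of_nonneg_right (hα₂ j) (norm_nonneg _)
        _ < α₂ * (a / α₂) := by
            rw [← dist_eq_norm] at *
            exact mul_lt_mul_of_pos_left hy_dist hα₂pos
        _ = a := by field_simp
    set G := A ∪ (c.support.filter (fun j => a ≤ ‖f j x‖)) with hG
    have hAG : A ⊆ G := Finset.subset_union_left
    have hGge : ∀ i ∈ G, a ≤ ‖f i x‖ := by
      intro i hi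
      rcases Finset.mem_union.mp hi with h | h
      · exact hamin i h
      · exact (Finset.mem_filter.mp h).2
    have hGlt : ∀ j ∉ G, ‖f j x‖ < a := by
      intro j hj
      rw [hG, Finset.mem_union] at hj
      push_neg at hj
      by_cases hjc : j ∈ c.support
      · rcases not_le.mp (fun h => hj.2 (Finset.mem_filter.mpr ⟨hjc, h⟩)) with h
        exact h
      · exact hsmall j hjc
    have hGpos : ∀ i ∈ G, 0 < ‖f i x‖ := fun i hi => lt_of_lt_of_le hapos (hGge i hi)
    -- G is a greedy set
    have hGgreedy : ∀ T ⊆ G, (∀ i ∈ T, ∀ j ∈ G, j ∉ T → ‖f j x‖ ≤ ‖f i x‖) →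
        ‖∑ i ∈ T, f i x • e i‖ ≤ Cq * ‖x‖ := by
      intro T hTsub hTup
      refine hqg x T ?_
      intro i hi j hj
      by_cases hjG : j ∈ G
      · exact hTup i hi j hjG hj
      · exact (hGlt j hjG).le.trans (hGge i (hTsub hi))
    have hGbound : ‖∑ i ∈ G, f i x • e i‖ ≤ Cq * ‖x‖ :=
      hGgreedy G (subset_refl _) (fun i _ j _ hj => absurd ‹j ∈ G› hj)
    -- the sign vector w
    set ε : ℕ → ℂ := fun i => (f i x) / ((‖f i x‖ : ℝ) : ℂ) with hε
    set w := ∑ i ∈ G, ε i • e i with hw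
    have hεnorm : ∀ i ∈ G, ‖ε i‖ = 1 := by
      intro i hi
      have h := (hGpos i hi).ne'
      show ‖(f i) x / ((‖(f i) x‖ : ℝ) : ℂ)‖ = 1
      rw [norm_div, Complex.norm_real, Real.norm_eq_abs, abs_of_nonneg (norm_nonneg _)]
      exact div_self h
    have hfw : ∀ j, f j w = if j ∈ G then ε j else 0 := by
      intro j
      rw [hw, map_sum]
      have : ∀ i ∈ G, f j (ε i • e i) = if i = j then ε i else 0 := by
        intro i _
        rw [map_smul, hbi]
        rcases eq_or_ne i j with rfl | hne
        · simp [eq_comm]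
        · simp [hne, Ne.symm hne]
      rw [Finset.sum_congr rfl this, Finset.sum_ite_eq']
    -- App 1: a * ‖w‖ ≤ 2 Cq ‖x‖  (truncation)
    have htrunc : a * ‖w‖ ≤ 2 * Cq * ‖x‖ := by
      have hkey : ∑ i ∈ G, ((1 - a / ‖f i x‖ : ℝ) : ℂ) • (f i x • e i)
          = (∑ i ∈ G, f i x • e i) - (a : ℂ) • w := by
        rw [hw, Finset.smul_sum, ← Finset.sum_sub_distrib]
        refine Finset.sum_congr rfl fun i hi => ?_
        have h := (hGpos i hi).ne'
        rw [smul_smul, smul_smul, ← sub_smul]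
        congr 1
        rw [hε]
        have hne : ((‖f i x‖ : ℝ) : ℂ) ≠ 0 := by
          simpa using h
        push_cast
        field_simp
      have habel : ‖∑ i ∈ G, ((1 - a / ‖f i x‖ : ℝ) : ℂ) • (f i x • e i)‖ ≤ 1 * (Cq * ‖x‖) := by
        refine abel_sum (fun i => f i x • e i) (Cq * ‖x‖)
          (mul_nonneg hCq.le hxnn) G.card G le_rfl
          (fun i => 1 - a / ‖f i x‖) 1 zero_le_one ?_ ?_
        · intro i hi
          have h1 := hGpos i hi
          have h2 := hGge i hi
          have h3 : a / ‖f i x‖ ≤ 1 := (div_le_one h1).mpr h2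
          have h4 : 0 < a / ‖f i x‖ := div_pos hapos h1
          constructor <;> linarith
        · intro T hTsub hTup
          refine hGgreedy T hTsub ?_
          intro i hi j hjG hjT
          have h := hTup i hi j hjG hjT
          have hpi := hGpos i (hTsub hi)
          have hpj := hGpos j hjG
          -- 1 - a/‖f j x‖ ≤ 1 - a/‖f i x‖  ⇒  a/‖f i x‖ ≤ a/‖f j x‖ ⇒ ‖f j x‖ ≤ ‖f i x‖
          have h5 : a / ‖f i x‖ ≤ a / ‖f j x‖ := by linarith
          have := (div_le_div_iff₀ hpi hpj).mp h5
          nlinarith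
      have : ‖(a : ℂ) • w‖ ≤ 2 * Cq * ‖x‖ := by
        have h6 : (a : ℂ) • w = (∑ i ∈ G, f i x • e i)
            - ∑ i ∈ G, ((1 - a / ‖f i x‖ : ℝ) : ℂ) • (f i x • e i) := by
          rw [hkey]; abel
        rw [h6]
        calc ‖_ - _‖ ≤ ‖∑ i ∈ G, f i x • e i‖
              + ‖∑ i ∈ G, ((1 - a / ‖f i x‖ : ℝ) : ℂ) • (f i x • e i)‖ := norm_sub_le _ _
          _ ≤ Cq * ‖x‖ + 1 * (Cq * ‖x‖) := add_le_add hGbound habel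
          _ = 2 * Cq * ‖x‖ := by ring
      rwa [norm_smul, Complex.norm_real, Real.norm_eq_abs, abs_of_pos hapos] at this
    -- App 2: ‖P_D x‖ ≤ (a/t) * Cq * ‖w‖ where D = G \ A
    set D := G \ A with hD
    have hDsub : D ⊆ G := Finset.sdiff_subset
    have hDbound : ‖∑ i ∈ D, f i x • e i‖ ≤ (a / t) * (Cq * ‖w‖) := by
      have hkey : ∑ i ∈ G, (((if i ∈ D then ‖f i x‖ else 0 : ℝ)) : ℂ) • (ε i • e i)
          = ∑ i ∈ D, f i x • e i := by
        have hzero : ∀ i ∈ G, i ∉ D →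
            (((if i ∈ D then ‖f i x‖ else 0 : ℝ)) : ℂ) • (ε i • e i) = 0 := by
          intro i _ hiD
          rw [if_neg hiD]
          simp
        rw [← Finset.sum_subset hDsub hzero]
        refine Finset.sum_congr rfl fun i hi => ?_
        have h := (hGpos i (hDsub hi)).ne'
        rw [if_pos hi, smul_smul]
        congr 1
        show ((‖f i x‖ : ℝ) : ℂ) * ((f i) x / ((‖(f i) x‖ : ℝ) : ℂ)) = f i x
        have hne : ((‖f i x‖ : ℝ) : ℂ) ≠ 0 := by simpa using h
        field_simp
      rw [← hkey]
      refine abel_sum (fun i => ε i • e i) (Cq * ‖w‖)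
        (mul_nonneg hCq.le (norm_nonneg w)) G.card G le_rfl
        (fun i => if i ∈ D then ‖f i x‖ else 0) (a / t) (by positivity) ?_ ?_
      · intro i hi
        by_cases hiD : i ∈ D
        · rw [if_pos hiD]
          have hiA : i ∉ A := (Finset.mem_sdiff.mp hiD).2
          have h1 := hout i hiA
          refine ⟨norm_nonneg _, ?_⟩
          rw [div_eq_inv_mul, ← mul_le_mul_iff_right₀ ht0, ← mul_assoc, mul_inv_cancel₀ ht0.ne',
            one_mul]
          exact h1
        · rw [if_neg hiD]
          exact ⟨le_refl 0, by positivity⟩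
      · intro T hTsub _
        have : ∑ i ∈ T, ε i • e i = ∑ i ∈ T, f i w • e i := by
          refine Finset.sum_congr rfl fun i hi => ?_
          rw [hfw i, if_pos (hTsub hi)]
        rw [this]
        refine hqg w T ?_
        intro i hi j hj
        have h1 : ‖f i w‖ = 1 := by rw [hfw i, if_pos (hTsub hi)]; exact hεnorm i (hTsub hi)
        rw [h1, hfw j]
        by_cases hjG : j ∈ G
        · rw [if_pos hjG]; exact (hεnorm j hjG).le
        · rw [if_neg hjG]; simp
    -- combine
    have hsplit : ∑ i ∈ A, f i x • e i
        = (∑ i ∈ G, f i x • e i) - ∑ i ∈ D, f i x • e i := by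
      rw [hD, eq_sub_iff_add_eq, Finset.sum_sdiff_eq_sub hAG]
      abel
    have hwle : Cq * ‖w‖ ≤ Cq * (2 * Cq * ‖x‖ / a) := by
      have : ‖w‖ ≤ 2 * Cq * ‖x‖ / a := by
        rw [le_div_iff₀ hapos]; nlinarith
      nlinarith
    have hDfinal : ‖∑ i ∈ D, f i x • e i‖ ≤ 2 * t⁻¹ * Cq ^ 2 * ‖x‖ := by
      calc ‖∑ i ∈ D, f i x • e i‖ ≤ (a / t) * (Cq * ‖w‖) := hDbound
        _ ≤ (a / t) * (Cq * (2 * Cq * ‖x‖ / a)) := by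
            refine mul_le_mul_of_nonneg_left hwle (by positivity)
        _ = 2 * t⁻¹ * Cq ^ 2 * ‖x‖ := by
            field_simp
    calc ‖∑ i ∈ A, f i x • e i‖
        ≤ ‖∑ i ∈ G, f i x • e i‖ + ‖∑ i ∈ D, f i x • e i‖ := by
          rw [hsplit]; exact norm_sub_le _ _
      _ ≤ Cq * ‖x‖ + 2 * t⁻¹ * Cq ^ 2 * ‖x‖ := add_le_add hGbound hDfinal
      _ ≤ Cq * ‖x‖ + 4 * t⁻¹ * Cq ^ 2 * ‖x‖ := by
          have h : 0 ≤ t⁻¹ * Cq ^ 2 * ‖x‖ := by positivity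
          linarith
      _ = (Cq + 4 * t⁻¹ * Cq ^ 2) * ‖x‖ := by ring
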